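/- arXiv:1707.07517 — 3 statements merged into one kernel-verified Lean document; each statement's English description precedes it below -/
import Mathlib

section
/- For N ≥ 3, the function E : [(N-2)/(N-1), 1] → ℝ defined by E(R) = ∫_0^R r^{N-1} dr + ∫_R^∞ c(R)² (N-2)² r^{1-N} dr, where c(R) = R^{N-2}(1-R), is non-decreasing, and hence attains its minimum at R̄ = (N-2)/(N-1), with E(R̄) = (2/N)((N-2)/(N-1))^{N-1}. -/
open Set

private lemma energy_val (M : ℕ) (R : ℝ) (hR : 0 < R) :
    (∫ r in (0:ℝ)..R, r ^ (M + 3 - 1)) +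
      (∫ r in Set.Ioi R, (R ^ (M + 3 - 2) * (1 - R)) ^ 2 * (((M + 3 : ℕ):ℝ) - 2) ^ 2 *
        r ^ ((1:ℝ) - ((M + 3 : ℕ) : ℝ)))
    = R ^ (M + 3) / ((M:ℝ) + 3) + ((M:ℝ) + 1) * R ^ (M + 1) * (1 - R) ^ 2 := by
  have e1 : M + 3 - 1 = M + 2 := rfl
  have e2 : M + 3 - 2 = M + 1 := rfl
  have h1 : (∫ r in (0:ℝ)..R, r ^ (M + 2)) = R ^ (M + 3) / ((M:ℝ) + 3) := by
    rw [integral_pow]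
    push_cast
    ring
  have hlt : (1:ℝ) - ((M + 3 : ℕ) : ℝ) < -1 := by push_cast; linarith [Nat.cast_nonneg (α := ℝ) M]
  have h2 : (∫ r in Set.Ioi R, r ^ ((1:ℝ) - ((M + 3 : ℕ) : ℝ)))
      = (R ^ (M + 1))⁻¹ / ((M:ℝ) + 1) := by
    rw [integral_Ioi_rpow_of_lt hlt hR]
    have : (1:ℝ) - ((M + 3 : ℕ) : ℝ) + 1 = -((M:ℝ) + 1) := by push_cast; ring
    rw [this, Real.rpow_neg hR.le]
    rw [show ((M:ℝ) + 1) = ((M + 1 : ℕ) : ℝ) by push_cast; ring, Real.rpow_natCast]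
    rw [neg_div_neg_eq]
  rw [e1, e2, h1]
  simp only [mul_assoc]
  rw [MeasureTheory.integral_const_mul, MeasureTheory.integral_const_mul, h2]
  have hRM : R ^ (M + 1) ≠ 0 := pow_ne_zero _ hR.ne'
  have hM1 : (M:ℝ) + 1 ≠ 0 := by positivity
  push_cast
  field_simp
  ring

private lemma f_deriv (M : ℕ) (R : ℝ) :
    HasDerivAt (fun R : ℝ => R ^ (M + 3) / ((M:ℝ) + 3) + ((M:ℝ) + 1) * R ^ (M + 1) * (1 - R) ^ 2)
      (R ^ M * (((M:ℝ) + 2) * R - ((M:ℝ) + 1)) ^ 2) R := by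
  have h1 : HasDerivAt (fun R : ℝ => R ^ (M + 3)) (((M:ℝ) + 3) * R ^ (M + 2)) R := by
    simpa using hasDerivAt_pow (M + 3) R
  have h2 : HasDerivAt (fun R : ℝ => R ^ (M + 1)) (((M:ℝ) + 1) * R ^ M) R := by
    simpa using hasDerivAt_pow (M + 1) R
  have h3 : HasDerivAt (fun R : ℝ => (1 - R) ^ 2) (2 * (1 - R) * (-1)) R := by
    have := ((hasDerivAt_id R).const_sub 1).fun_pow 2
    simpa using this
  have := (h1.div_const ((M:ℝ) + 3)).fun_add (((h2.const_mul ((M:ℝ) + 1)).fun_mul h3))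
  refine this.congr_deriv ?_
  have hM3 : (M:ℝ) + 3 ≠ 0 := by positivity
  field_simp
  ring

private lemma f_mono (M : ℕ) :
    MonotoneOn (fun R : ℝ => R ^ (M + 3) / ((M:ℝ) + 3) + ((M:ℝ) + 1) * R ^ (M + 1) * (1 - R) ^ 2)
      (Set.Icc (((M:ℝ) + 1) / ((M:ℝ) + 2)) 1) := by
  apply monotoneOn_of_deriv_nonneg (convex_Icc _ _)
  · exact Continuous.continuousOn (by continuity)
  · intro x hx
    exact (f_deriv M x).differentiableAt.differentiableWithinAt
  · intro x hx
    rw [(f_deriv M x).deriv]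
    rw [interior_Icc] at hx
    have hx0 : 0 < x := lt_of_le_of_lt (by positivity) hx.1
    positivity

theorem energy_monotone_and_min (N : ℕ) (hN : 3 ≤ N) (E : ℝ → ℝ)
    (hE : ∀ R : ℝ, E R =
      (∫ r in (0:ℝ)..R, r ^ (N - 1)) +
        ∫ r in Set.Ioi R, (R ^ (N - 2) * (1 - R)) ^ 2 * ((N:ℝ) - 2) ^ 2 * r ^ ((1:ℝ) - N)) :
    MonotoneOn E (Set.Icc (((N:ℝ) - 2) / ((N:ℝ) - 1)) 1) ∧
    (∀ R ∈ Set.Icc (((N:ℝ) - 2) / ((N:ℝ) - 1)) 1,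
        E (((N:ℝ) - 2) / ((N:ℝ) - 1)) ≤ E R) ∧
    E (((N:ℝ) - 2) / ((N:ℝ) - 1)) = (2 / N) * (((N:ℝ) - 2) / ((N:ℝ) - 1)) ^ (N - 1) := by
  obtain ⟨M, rfl⟩ : ∃ M, N = M + 3 := ⟨N - 3, by omega⟩
  have hcast2 : ((M + 3 : ℕ) : ℝ) - 2 = (M:ℝ) + 1 := by push_cast; ring
  have hcast1 : ((M + 3 : ℕ) : ℝ) - 1 = (M:ℝ) + 2 := by push_cast; ring
  set a : ℝ := (((M + 3 : ℕ):ℝ) - 2) / (((M + 3 : ℕ):ℝ) - 1) with ha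
  have haval : a = ((M:ℝ) + 1) / ((M:ℝ) + 2) := by rw [ha, hcast1, hcast2]
  have hM2 : (0:ℝ) < (M:ℝ) + 2 := by positivity
  have ha0 : 0 < a := by rw [haval]; positivity
  have ha1 : a ≤ 1 := by
    rw [haval, div_le_one hM2]; linarith
  set f : ℝ → ℝ := fun R : ℝ => R ^ (M + 3) / ((M:ℝ) + 3) + ((M:ℝ) + 1) * R ^ (M + 1) * (1 - R) ^ 2
    with hf
  have hEf : ∀ R ∈ Set.Icc a 1, E R = f R := by
    intro R hR
    rw [hE R, energy_val M R (lt_of_lt_of_le ha0 hR.1)]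
  have hset : Set.Icc a 1 = Set.Icc (((M:ℝ) + 1) / ((M:ℝ) + 2)) 1 := by rw [haval]
  have hmono : MonotoneOn E (Set.Icc a 1) := by
    intro x hx y hy hxy
    rw [hEf x hx, hEf y hy]
    exact f_mono M (hset ▸ hx) (hset ▸ hy) hxy
  have hamem : a ∈ Set.Icc a 1 := ⟨le_refl a, ha1⟩
  refine ⟨hmono, fun R hR => hmono hamem hR hR.1, ?_⟩
  rw [hEf a hamem, hf]
  have h1a : 1 - a = 1 / ((M:ℝ) + 2) := by rw [haval]; field_simp; norm_num
  simp only []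
  rw [h1a, haval]
  have hM3 : (0:ℝ) < (M:ℝ) + 3 := by positivity
  have e1 : M + 3 - 1 = M + 2 := rfl
  rw [e1]
  have hp3 : (((M:ℝ) + 1) / ((M:ℝ) + 2)) ^ (M + 3)
      = (((M:ℝ) + 1) / ((M:ℝ) + 2)) ^ (M + 1) * (((M:ℝ) + 1) / ((M:ℝ) + 2)) ^ 2 := by
    rw [← pow_add]
  have hp2 : (((M:ℝ) + 1) / ((M:ℝ) + 2)) ^ (M + 2)
      = (((M:ℝ) + 1) / ((M:ℝ) + 2)) ^ (M + 1) * (((M:ℝ) + 1) / ((M:ℝ) + 2)) := by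
    rw [← pow_succ]
  rw [hp3, hp2]
  push_cast
  field_simp
  ring
end

section
/- Let N ≥ 3 and let u : ℝ^N → ℝ be defined radially by u(x) = 1 - |x| for |x| ≤ R and u(x) = R^{N-2}(1-R)|x|^{2-N} for |x| ≥ R, with R = (N-2)/(N-1). Then u is Lipschitz with Lipschitz constant 1, ‖u‖_{L^∞} = 1, and ∫_{ℝ^N} |∇u|² dx = (2/N)((N-2)/(N-1))^{N-1} ω_{N-1}, where ω_{N-1} is the surface measure of the unit sphere in ℝ^N. -/
open MeasureTheory

/-- Surface measure of the unit sphere in `ℝ^N`. -/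
noncomputable def sphereMeasure (N : ℕ) : ℝ :=
  (N : ℝ) * (volume (Metric.ball (0 : EuclideanSpace ℝ (Fin N)) 1)).toReal

theorem explicit_minimizer (N : ℕ) (hN : 3 ≤ N)
    (R : ℝ) (hR : R = ((N:ℝ) - 2) / ((N:ℝ) - 1))
    (u : EuclideanSpace ℝ (Fin N) → ℝ)
    (hu : ∀ x, (‖x‖ ≤ R → u x = 1 - ‖x‖) ∧
      (R ≤ ‖x‖ → u x = R ^ (N - 2) * (1 - R) * ‖x‖ ^ ((2:ℝ) - N))) :
    LipschitzWith 1 u ∧ (∀ x, |u x| ≤ 1) ∧ u 0 = 1 ∧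
      ∫ x, ‖fderiv ℝ u x‖ ^ 2 =
        (2 / N) * (((N:ℝ) - 2) / ((N:ℝ) - 1)) ^ (N - 1) * sphereMeasure N := by
  have hN3 : (3:ℝ) ≤ (N:ℝ) := by exact_mod_cast hN
  have hn1 : (0:ℝ) < (N:ℝ) - 1 := by linarith
  have hn2 : (0:ℝ) < (N:ℝ) - 2 := by linarith
  have hR0 : 0 < R := by rw [hR]; positivity
  have hR1 : R < 1 := by rw [hR, div_lt_one hn1]; linarith
  set c : ℝ := R ^ (N - 2) * (1 - R) with hc
  have hc0 : 0 < c := mul_pos (pow_pos hR0 _) (by linarith)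
  have hcast2 : ((N - 2 : ℕ) : ℝ) = (N:ℝ) - 2 := by
    have : (2:ℕ) ≤ N := by omega
    push_cast [Nat.cast_sub this]; ring
  have hcast1 : ((N - 1 : ℕ) : ℝ) = (N:ℝ) - 1 := by
    have : (1:ℕ) ≤ N := by omega
    push_cast [Nat.cast_sub this]; ring
  have hRpow : R ^ (N - 2) = R ^ ((N:ℝ) - 2) := by
    rw [← Real.rpow_natCast R (N - 2), hcast2]
  -- key scalar identity: c * (N-2) * R^(1-N) = 1
  have hkey : c * ((N:ℝ) - 2) * R ^ ((1:ℝ) - (N:ℝ)) = 1 := by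
    have h1 : c * ((N:ℝ)-2) * R ^ ((1:ℝ)-(N:ℝ))
        = (1-R) * ((N:ℝ)-2) * (R ^ ((N:ℝ)-2) * R ^ ((1:ℝ)-(N:ℝ))) := by
      rw [hc, hRpow]; ring
    rw [h1, ← Real.rpow_add hR0, show ((N:ℝ)-2) + ((1:ℝ)-(N:ℝ)) = -1 by ring,
      Real.rpow_neg_one, hR]
    field_simp
    ring
  -- derivative bound for the outer profile
  have hbound : ∀ r : ℝ, R ≤ r → |c * (((2:ℝ) - (N:ℝ)) * r ^ ((2:ℝ) - (N:ℝ) - 1))| ≤ 1 := by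
    intro r hr
    have hr0 : (0:ℝ) < r := lt_of_lt_of_le hR0 hr
    have h1 : |c * (((2:ℝ)-(N:ℝ)) * r ^ ((2:ℝ)-(N:ℝ)-1))|
        = c * ((N:ℝ)-2) * r ^ ((1:ℝ)-(N:ℝ)) := by
      rw [abs_mul, abs_of_pos hc0, abs_mul, abs_of_pos (Real.rpow_pos_of_pos hr0 _),
        show |(2:ℝ)-(N:ℝ)| = (N:ℝ)-2 by rw [abs_of_nonpos (by linarith)]; ring,
        show ((2:ℝ)-(N:ℝ)-1) = (1:ℝ)-(N:ℝ) by ring]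
      ring
    rw [h1]
    have h2 : r ^ ((1:ℝ)-(N:ℝ)) ≤ R ^ ((1:ℝ)-(N:ℝ)) :=
      Real.rpow_le_rpow_of_nonpos hR0 hr (by linarith)
    have h3 : (0:ℝ) ≤ c * ((N:ℝ)-2) := by positivity
    have h4 := mul_le_mul_of_nonneg_left h2 h3
    calc c * ((N:ℝ)-2) * r ^ ((1:ℝ)-(N:ℝ)) ≤ c * ((N:ℝ)-2) * R ^ ((1:ℝ)-(N:ℝ)) := h4
      _ = 1 := hkey
  -- Lipschitz on the two regions
  have hA : ∀ a b : EuclideanSpace ℝ (Fin N), ‖a‖ ≤ R → ‖b‖ ≤ R →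
      dist (u a) (u b) ≤ dist a b := by
    intro a b ha hb
    rw [(hu a).1 ha, (hu b).1 hb, Real.dist_eq, dist_eq_norm,
      show (1-‖a‖) - (1-‖b‖) = ‖b‖ - ‖a‖ by ring]
    calc |‖b‖ - ‖a‖| ≤ ‖b - a‖ := abs_norm_sub_norm_le b a
      _ = ‖a - b‖ := norm_sub_rev b a
  have hB : ∀ a b : EuclideanSpace ℝ (Fin N), R ≤ ‖a‖ → R ≤ ‖b‖ →
      dist (u a) (u b) ≤ dist a b := by
    intro a b ha hb
    rw [(hu a).2 ha, (hu b).2 hb, Real.dist_eq, dist_eq_norm]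
    have hd : ∀ r ∈ Set.Ici R, HasDerivWithinAt (fun t : ℝ => c * t ^ ((2:ℝ)-(N:ℝ)))
        ((fun r : ℝ => c * (((2:ℝ)-(N:ℝ)) * r ^ ((2:ℝ)-(N:ℝ)-1))) r) (Set.Ici R) r := by
      intro r hr
      exact ((Real.hasDerivAt_rpow_const
        (Or.inl (lt_of_lt_of_le hR0 hr).ne')).const_mul c).hasDerivWithinAt
    have key := Convex.norm_image_sub_le_of_norm_hasDerivWithin_le hd
      (fun r hr => by rw [Real.norm_eq_abs]; exact hbound r hr) (convex_Ici R) hb ha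
    simp only [Real.norm_eq_abs, one_mul] at key
    calc |c * ‖a‖ ^ ((2:ℝ)-(N:ℝ)) - c * ‖b‖ ^ ((2:ℝ)-(N:ℝ))| ≤ |‖a‖ - ‖b‖| := key
      _ ≤ ‖a - b‖ := abs_norm_sub_norm_le a b
  -- crossing point on the segment
  have hseg : ∀ a b : EuclideanSpace ℝ (Fin N), ‖a‖ ≤ R → R ≤ ‖b‖ →
      ∃ z : EuclideanSpace ℝ (Fin N), ‖z‖ = R ∧ dist a z + dist z b = dist a b := by
    intro a b ha hb
    have hcont : ContinuousOn (fun t : ℝ => ‖a + t • (b - a)‖) (Set.Icc 0 1) :=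
      (continuous_norm.comp (continuous_const.add
        (continuous_id.smul continuous_const))).continuousOn
    have hmem : R ∈ Set.Icc (‖a + (0:ℝ) • (b - a)‖) (‖a + (1:ℝ) • (b - a)‖) := by
      constructor
      · simpa using ha
      · simpa using hb
    obtain ⟨t, ht, hzt⟩ := intermediate_value_Icc zero_le_one hcont hmem
    refine ⟨a + t • (b - a), hzt, ?_⟩
    rw [dist_eq_norm, dist_eq_norm, dist_eq_norm]
    have h1 : a - (a + t • (b - a)) = (-t) • (b - a) := by module
    have h2 : (a + t • (b - a)) - b = (t - 1) • (b - a) := by module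
    rw [h1, h2, norm_smul, norm_smul, Real.norm_eq_abs, Real.norm_eq_abs,
      abs_of_nonpos (by linarith [ht.1] : -t ≤ 0), abs_of_nonpos (by linarith [ht.2] : t-1 ≤ 0),
      show ‖a - b‖ = ‖b - a‖ from norm_sub_rev a b]
    ring
  have hlip : LipschitzWith 1 u := by
    refine LipschitzWith.of_dist_le_mul fun x y => ?_
    rw [NNReal.coe_one, one_mul]
    rcases le_total ‖x‖ R with hx | hx <;> rcases le_total ‖y‖ R with hy | hy
    · exact hA x y hx hy
    · obtain ⟨z, hz, hsum⟩ := hseg x y hx hy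
      calc dist (u x) (u y) ≤ dist (u x) (u z) + dist (u z) (u y) := dist_triangle _ _ _
        _ ≤ dist x z + dist z y := add_le_add (hA x z hx hz.le) (hB z y hz.ge hy)
        _ = dist x y := hsum
    · obtain ⟨z, hz, hsum⟩ := hseg y x hy hx
      calc dist (u x) (u y) ≤ dist (u x) (u z) + dist (u z) (u y) := dist_triangle _ _ _
        _ ≤ dist x z + dist z y := add_le_add (hB x z hx hz.ge) (hA z y hz.le hy)
        _ = dist x y := by
            rw [dist_comm x z, dist_comm z y, dist_comm x y, add_comm]; exact hsum
    · exact hB x y hx hy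
  refine ⟨hlip, ?_, ?_, ?_⟩
  · intro x
    rcases le_total ‖x‖ R with hx | hx
    · rw [(hu x).1 hx, abs_of_nonneg (by linarith : (0:ℝ) ≤ 1 - ‖x‖)]
      linarith [norm_nonneg x]
    · rw [(hu x).2 hx]
      have h0 : (0:ℝ) < ‖x‖ := lt_of_lt_of_le hR0 hx
      have hp : (0:ℝ) < c * ‖x‖ ^ ((2:ℝ)-(N:ℝ)) := mul_pos hc0 (Real.rpow_pos_of_pos h0 _)
      have hle : ‖x‖ ^ ((2:ℝ)-(N:ℝ)) ≤ R ^ ((2:ℝ)-(N:ℝ)) :=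
        Real.rpow_le_rpow_of_nonpos hR0 hx (by linarith)
      have hone : R ^ ((N:ℝ)-2) * R ^ ((2:ℝ)-(N:ℝ)) = 1 := by
        rw [← Real.rpow_add hR0, show ((N:ℝ)-2) + ((2:ℝ)-(N:ℝ)) = 0 by ring, Real.rpow_zero]
      have hval : c * R ^ ((2:ℝ)-(N:ℝ)) = 1 - R := by
        calc c * R ^ ((2:ℝ)-(N:ℝ))
            = (1-R) * (R ^ ((N:ℝ)-2) * R ^ ((2:ℝ)-(N:ℝ))) := by rw [hc, hRpow]; ring
          _ = 1 - R := by rw [hone, mul_one]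
      rw [abs_of_pos hp]
      calc c * ‖x‖ ^ ((2:ℝ)-(N:ℝ)) ≤ c * R ^ ((2:ℝ)-(N:ℝ)) :=
            mul_le_mul_of_nonneg_left hle hc0.le
        _ = 1 - R := hval
        _ ≤ 1 := by linarith
  · have : ‖(0 : EuclideanSpace ℝ (Fin N))‖ ≤ R := by simp [hR0.le]
    rw [(hu 0).1 this, norm_zero, sub_zero]
  · -- the integral computation
    haveI hnonempty : Nonempty (Fin N) := ⟨⟨0, by omega⟩⟩
    haveI hnontriv : Nontrivial (EuclideanSpace ℝ (Fin N)) := by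
      refine ⟨⟨0, EuclideanSpace.single ⟨0, by omega⟩ 1, fun h => ?_⟩⟩
      have h2 := congrArg (fun v : EuclideanSpace ℝ (Fin N) => v ⟨0, by omega⟩) h
      simp [EuclideanSpace.single_apply] at h2
    set K : ℝ := (c * ((N:ℝ)-2))^2 with hK
    set F : ℝ → ℝ := fun r => if r ≤ R then 1 else K * r ^ ((2:ℝ) - 2*(N:ℝ)) with hF
    have hae : ∀ᵐ x : EuclideanSpace ℝ (Fin N), ‖fderiv ℝ u x‖ ^ 2 = F ‖x‖ := by
      have hsph : (volume : Measure (EuclideanSpace ℝ (Fin N))) (Metric.sphere 0 R) = 0 :=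
        Measure.addHaar_sphere volume 0 R
      have h0m : (volume : Measure (EuclideanSpace ℝ (Fin N))) (Metric.sphere 0 0) = 0 :=
        Measure.addHaar_sphere volume 0 0
      have h1 : ∀ᵐ x : EuclideanSpace ℝ (Fin N), ‖x‖ ≠ R := by
        rw [MeasureTheory.ae_iff]
        convert hsph using 2
        ext x
        simp [Metric.mem_sphere, dist_zero_right]
      have h2 : ∀ᵐ x : EuclideanSpace ℝ (Fin N), x ≠ 0 := by
        rw [MeasureTheory.ae_iff]
        convert h0m using 2
        ext x
        simp [Metric.mem_sphere, dist_zero_right]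
      filter_upwards [h1, h2] with x hxR hx0
      have hx0' : ‖x‖ ≠ 0 := norm_ne_zero_iff.2 hx0
      have hxpos : (0:ℝ) < ‖x‖ := norm_pos_iff.2 hx0
      have hdn : DifferentiableAt ℝ (fun y : EuclideanSpace ℝ (Fin N) => ‖y‖) x :=
        DifferentiableAt.norm ℝ differentiableAt_id hx0
      rcases lt_or_gt_of_ne hxR with hlt | hgt
      · -- inner region
        have ho : IsOpen {y : EuclideanSpace ℝ (Fin N) | ‖y‖ < R} :=
          isOpen_lt continuous_norm continuous_const
        have hev : u =ᶠ[nhds x] fun y => 1 - ‖y‖ := by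
          filter_upwards [ho.mem_nhds hlt] with y hy using (hu y).1 hy.le
        rw [hev.fderiv_eq]
        have hder : HasFDerivAt (fun y : EuclideanSpace ℝ (Fin N) => 1 - ‖y‖)
            (0 - fderiv ℝ (fun y : EuclideanSpace ℝ (Fin N) => ‖y‖) x) x :=
          (hasFDerivAt_const (1:ℝ) x).sub hdn.hasFDerivAt
        rw [hder.fderiv, zero_sub, norm_neg, norm_fderiv_norm hdn]
        simp [hF, hlt.le]
      · -- outer region
        have ho : IsOpen {y : EuclideanSpace ℝ (Fin N) | R < ‖y‖} :=
          isOpen_lt continuous_const continuous_norm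
        have hev : u =ᶠ[nhds x] fun y => c * ‖y‖ ^ ((2:ℝ) - (N:ℝ)) := by
          filter_upwards [ho.mem_nhds hgt] with y hy using (hu y).2 hy.le
        rw [hev.fderiv_eq]
        have hder1 : HasDerivAt (fun t : ℝ => t ^ ((2:ℝ)-(N:ℝ)))
            (((2:ℝ)-(N:ℝ)) * ‖x‖ ^ ((2:ℝ)-(N:ℝ)-1)) ‖x‖ :=
          Real.hasDerivAt_rpow_const (Or.inl hx0')
        have hder : HasFDerivAt (fun y : EuclideanSpace ℝ (Fin N) => c * ‖y‖ ^ ((2:ℝ)-(N:ℝ)))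
            (c • ((((2:ℝ)-(N:ℝ)) * ‖x‖ ^ ((2:ℝ)-(N:ℝ)-1)) •
              fderiv ℝ (fun y : EuclideanSpace ℝ (Fin N) => ‖y‖) x)) x :=
          (hder1.comp_hasFDerivAt x hdn.hasFDerivAt).const_mul c
        rw [hder.fderiv, norm_smul, norm_smul, norm_fderiv_norm hdn, mul_one,
          Real.norm_eq_abs, Real.norm_eq_abs, abs_of_pos hc0, abs_mul,
          show |(2:ℝ)-(N:ℝ)| = (N:ℝ)-2 by rw [abs_of_nonpos (by linarith)]; ring,
          abs_of_pos (Real.rpow_pos_of_pos hxpos _)]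
        have hnle : ¬ ‖x‖ ≤ R := not_le.2 hgt
        have hsq : (‖x‖ ^ ((2:ℝ)-(N:ℝ)-1))^2 = ‖x‖ ^ ((2:ℝ) - 2*(N:ℝ)) := by
          rw [← Real.rpow_natCast (‖x‖ ^ ((2:ℝ)-(N:ℝ)-1)) 2, ← Real.rpow_mul hxpos.le]
          norm_num
          ring_nf
        simp only [hF, if_neg hnle, hK]
        calc (c * (((N:ℝ)-2) * ‖x‖ ^ ((2:ℝ)-(N:ℝ)-1)))^2
            = (c * ((N:ℝ)-2))^2 * (‖x‖ ^ ((2:ℝ)-(N:ℝ)-1))^2 := by ring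
          _ = (c * ((N:ℝ)-2))^2 * ‖x‖ ^ ((2:ℝ) - 2*(N:ℝ)) := by rw [hsq]
    rw [integral_congr_ae hae]
    rw [MeasureTheory.integral_fun_norm_addHaar (volume : Measure (EuclideanSpace ℝ (Fin N))) F]
    have hdim : Module.finrank ℝ (EuclideanSpace ℝ (Fin N)) = N := finrank_euclideanSpace_fin
    rw [hdim]
    have h1d : ∫ y in Set.Ioi (0:ℝ), y ^ (N-1) • F y = (2/(N:ℝ)) * R ^ (N-1) := by
      have hsplit : Set.Ioo (0:ℝ) R ∪ Set.Ici R = Set.Ioi 0 := Set.Ioo_union_Ici_eq_Ioi hR0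
      have hdisj : Disjoint (Set.Ioo (0:ℝ) R) (Set.Ici R) := by
        rw [Set.disjoint_left]
        rintro r ⟨_, h2⟩ h3
        exact absurd h3 (not_le.2 h2)
      have heq1 : Set.EqOn (fun r : ℝ => r ^ (N-1)) (fun r : ℝ => r ^ (N-1) • F r)
          (Set.Ioo 0 R) := by
        intro r hr
        simp [hF, hr.2.le, smul_eq_mul]
      have heq2 : Set.EqOn (fun r : ℝ => K * r ^ ((1:ℝ)-(N:ℝ)))
          (fun r : ℝ => r ^ (N-1) • F r) (Set.Ioi R) := by
        intro r hr
        have hr0 : (0:ℝ) < r := hR0.trans hr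
        have hnle : ¬ r ≤ R := not_le.2 hr
        simp only [hF, if_neg hnle, smul_eq_mul]
        rw [← Real.rpow_natCast r (N-1), hcast1,
          show ((1:ℝ)-(N:ℝ)) = ((N:ℝ)-1) + ((2:ℝ)-2*(N:ℝ)) by ring, Real.rpow_add hr0]
        ring
      have hint1 : IntegrableOn (fun r : ℝ => r ^ (N-1) • F r) (Set.Ioo 0 R) := by
        refine IntegrableOn.congr_fun ?_ heq1 measurableSet_Ioo
        exact ((continuous_pow (N-1)).integrableOn_Icc (a := 0) (b := R)).mono_set
          Set.Ioo_subset_Icc_self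
      have hint2 : IntegrableOn (fun r : ℝ => r ^ (N-1) • F r) (Set.Ici R) := by
        rw [integrableOn_Ici_iff_integrableOn_Ioi]
        refine IntegrableOn.congr_fun ?_ heq2 measurableSet_Ioi
        exact (integrableOn_Ioi_rpow_of_lt (by linarith : (1:ℝ)-(N:ℝ) < -1) hR0).const_mul K
      have hv1 : ∫ r in Set.Ioo (0:ℝ) R, r ^ (N-1) • F r = R ^ N / N := by
        rw [← setIntegral_congr_fun measurableSet_Ioo heq1, ← integral_Ioc_eq_integral_Ioo,
          ← intervalIntegral.integral_of_le hR0.le, integral_pow,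
          Nat.sub_add_cancel (by omega : 1 ≤ N), zero_pow (by omega : N ≠ 0), hcast1]
        ring
      have hv2 : ∫ r in Set.Ici R, r ^ (N-1) • F r
          = K * (R ^ ((2:ℝ)-(N:ℝ)) / ((N:ℝ)-2)) := by
        rw [integral_Ici_eq_integral_Ioi, ← setIntegral_congr_fun measurableSet_Ioi heq2,
          integral_const_mul K _,
          integral_Ioi_rpow_of_lt (by linarith : (1:ℝ)-(N:ℝ) < -1) hR0]
        congr 1
        rw [show (1:ℝ)-(N:ℝ)+1 = (2:ℝ)-(N:ℝ) by ring]
        rw [div_eq_div_iff (by linarith) (by linarith)]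
        ring
      have hprod : R ^ ((1:ℝ)-(N:ℝ)) * R ^ ((N:ℝ)-1) = 1 := by
        rw [← Real.rpow_add hR0, show ((1:ℝ)-(N:ℝ)) + ((N:ℝ)-1) = 0 by ring, Real.rpow_zero]
      have hcn : c * ((N:ℝ)-2) = R ^ ((N:ℝ)-1) := by
        calc c * ((N:ℝ)-2)
            = c * ((N:ℝ)-2) * (R ^ ((1:ℝ)-(N:ℝ)) * R ^ ((N:ℝ)-1)) := by rw [hprod, mul_one]
          _ = (c * ((N:ℝ)-2) * R ^ ((1:ℝ)-(N:ℝ))) * R ^ ((N:ℝ)-1) := by ring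
          _ = R ^ ((N:ℝ)-1) := by rw [hkey, one_mul]
      have hKR : K * R ^ ((2:ℝ)-(N:ℝ)) = R ^ N := by
        rw [hK, hcn, sq, mul_assoc, ← Real.rpow_add hR0, ← Real.rpow_add hR0,
          show ((N:ℝ)-1) + (((N:ℝ)-1) + ((2:ℝ)-(N:ℝ))) = ((N:ℕ):ℝ) by ring,
          Real.rpow_natCast]
      have hRN : R ^ N = R ^ (N-1) * R := by
        conv_lhs => rw [show N = (N-1)+1 by omega]
        rw [pow_succ]
      have hfin : R / (N:ℝ) + R / ((N:ℝ)-2) = 2 / (N:ℝ) := by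
        rw [hR]
        field_simp
        ring
      rw [← hsplit, setIntegral_union hdisj measurableSet_Ici hint1 hint2, hv1, hv2]
      calc R ^ N / (N:ℝ) + K * (R ^ ((2:ℝ)-(N:ℝ)) / ((N:ℝ)-2))
          = R ^ N / (N:ℝ) + (K * R ^ ((2:ℝ)-(N:ℝ))) / ((N:ℝ)-2) := by ring
        _ = R ^ N / (N:ℝ) + R ^ N / ((N:ℝ)-2) := by rw [hKR]
        _ = R ^ (N-1) * (R / (N:ℝ) + R / ((N:ℝ)-2)) := by rw [hRN]; ring
        _ = R ^ (N-1) * (2 / (N:ℝ)) := by rw [hfin]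
        _ = (2/(N:ℝ)) * R ^ (N-1) := by ring
    rw [h1d]
    unfold sphereMeasure
    rw [← hR]
    simp only [nsmul_eq_mul, smul_eq_mul]
    simp only [measureReal_def]
    ring
end

section
/- Let N ≥ 3, a ≠ 0, and let ũ : (0,∞) → ℝ be defined by ũ(r) = ∫_r^∞ (a/ω)/sqrt(s^{2(N-1)} + (a/ω)²) ds, where ω = ω_{N-1} > 0. Then ũ is well-defined (the integral converges), ũ satisfies r^{N-1} ũ'(r)/sqrt(1 - ũ'(r)²) = -a/ω for all r > 0, |ũ'(r)| < 1 for r > 0, and lim_{r→∞} ũ(r) = 0. -/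
open MeasureTheory Set Filter

theorem radial_fundamental_solution (N : ℕ) (hN : 3 ≤ N)
    (a ω : ℝ) (ha : a ≠ 0) (hω : 0 < ω)
    (u : ℝ → ℝ)
    (hu : ∀ r : ℝ, u r = ∫ s in Set.Ioi r,
      (a / ω) / Real.sqrt (s ^ (2 * (N - 1)) + (a / ω) ^ 2)) :
    (∀ r : ℝ, 0 < r → IntegrableOn
        (fun s => (a / ω) / Real.sqrt (s ^ (2 * (N - 1)) + (a / ω) ^ 2)) (Set.Ioi r)) ∧
    (∀ r : ℝ, 0 < r → ∃ d : ℝ, HasDerivAt u d r ∧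
        r ^ (N - 1) * d / Real.sqrt (1 - d ^ 2) = -(a / ω) ∧ |d| < 1) ∧
    Tendsto u atTop (nhds 0) := by
  set c : ℝ := a / ω with hc_def
  have hc : c ≠ 0 := div_ne_zero ha hω.ne'
  set f : ℝ → ℝ := fun s => c / Real.sqrt (s ^ (2 * (N - 1)) + c ^ 2) with hf_def
  have hpos : ∀ s : ℝ, 0 < s ^ (2 * (N - 1)) + c ^ 2 := by
    intro s
    have h1 : (0:ℝ) ≤ s ^ (2 * (N - 1)) := by
      rw [pow_mul]; positivity
    have h2 : (0:ℝ) < c ^ 2 := by positivity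
    linarith
  have hsqrtpos : ∀ s : ℝ, 0 < Real.sqrt (s ^ (2 * (N - 1)) + c ^ 2) :=
    fun s => Real.sqrt_pos.mpr (hpos s)
  have hcont : Continuous f := by
    apply Continuous.div continuous_const
    · exact Real.continuous_sqrt.comp (by continuity)
    · intro s; exact (hsqrtpos s).ne'
  -- key bound and integrability
  have hint : ∀ r : ℝ, 0 < r → IntegrableOn f (Set.Ioi r) := by
    intro r hr
    have hexp : (-(N - 1 : ℕ) : ℝ) < -1 := by
      have : (2:ℝ) ≤ (N - 1 : ℕ) := by
        have : 2 ≤ N - 1 := by omega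
        exact_mod_cast this
      linarith
    have hg : IntegrableOn (fun s : ℝ => |c| * s ^ (-(N - 1 : ℕ) : ℝ)) (Set.Ioi r) :=
      (integrableOn_Ioi_rpow_of_lt hexp hr).const_mul _
    refine Integrable.mono' hg (hcont.aestronglyMeasurable.restrict) ?_
    filter_upwards [ae_restrict_mem measurableSet_Ioi] with s hs
    have hs0 : 0 < s := lt_trans hr hs
    have hpow : 0 < s ^ (N - 1) := pow_pos hs0 _
    have hle : (s : ℝ) ^ (N - 1) ≤ Real.sqrt (s ^ (2 * (N - 1)) + c ^ 2) := by
      rw [show 2 * (N - 1) = (N - 1) * 2 by ring, pow_mul]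
      calc s ^ (N - 1) = Real.sqrt ((s ^ (N - 1)) ^ 2) := (Real.sqrt_sq hpow.le).symm
        _ ≤ _ := Real.sqrt_le_sqrt (le_add_of_nonneg_right (sq_nonneg c))
    have hnorm : ‖f s‖ = |c| / Real.sqrt (s ^ (2 * (N - 1)) + c ^ 2) := by
      simp [hf_def, abs_div, abs_of_pos (hsqrtpos s)]
    rw [hnorm, Real.rpow_neg hs0.le, Real.rpow_natCast, ← div_eq_mul_inv]
    exact div_le_div_of_nonneg_left (abs_nonneg c) hpow hle
  -- splitting lemma
  have hsplit : ∀ p q : ℝ, 0 < p → p ≤ q →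
      (∫ s in Set.Ioi p, f s) = (∫ s in p..q, f s) + ∫ s in Set.Ioi q, f s := by
    intro p q hp hpq
    rw [intervalIntegral.integral_of_le hpq, ← Set.Ioc_union_Ioi_eq_Ioi hpq,
      setIntegral_union (Set.Ioc_disjoint_Ioi le_rfl) measurableSet_Ioi
        ((hint p hp).mono_set Set.Ioc_subset_Ioi_self) (hint q (lt_of_lt_of_le hp hpq))]
  refine ⟨hint, ?_, ?_⟩
  · -- derivative
    intro r hr
    refine ⟨-f r, ?_, ?_, ?_⟩
    · have hderiv : HasDerivAt (fun x => (∫ s in Set.Ioi r, f s) - ∫ s in r..x, f s)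
          (-f r) r := by
        have h1 : HasDerivAt (fun x => ∫ s in r..x, f s) (f r) r :=
          intervalIntegral.integral_hasDerivAt_right
            (hcont.intervalIntegrable _ _)
            (hcont.stronglyMeasurableAtFilter _ _) hcont.continuousAt
        have h2 := (hasDerivAt_const r (∫ s in Set.Ioi r, f s)).sub h1
        rw [zero_sub] at h2
        exact h2
      refine hderiv.congr_of_eventuallyEq ?_
      filter_upwards [eventually_gt_nhds hr] with x hx
      rw [hu x]
      rcases le_or_gt r x with h | h
      · rw [hsplit r x hr h]; ring
      · rw [hsplit x r hx h.le, intervalIntegral.integral_symm]; ring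
    · -- algebraic identity
      set A : ℝ := r ^ (2 * (N - 1)) + c ^ 2 with hA
      have hApos : 0 < A := hpos r
      have hsA : 0 < Real.sqrt A := hsqrtpos r
      have hrpow : 0 < r ^ (N - 1) := pow_pos hr _
      have hd2 : 1 - (-f r) ^ 2 = r ^ (2 * (N - 1)) / A := by
        have : (f r) ^ 2 = c ^ 2 / A := by
          rw [hf_def]
          rw [div_pow, Real.sq_sqrt hApos.le]
        rw [neg_pow, this]
        field_simp
        rw [hA]; ring
      have hsq : Real.sqrt (1 - (-f r) ^ 2) = r ^ (N - 1) / Real.sqrt A := by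
        rw [hd2, Real.sqrt_div (by positivity) A,
          show 2 * (N - 1) = (N - 1) * 2 by ring, pow_mul, Real.sqrt_sq hrpow.le]
      rw [hsq, hf_def]
      field_simp
      rw [← hA]
    · rw [abs_neg, hf_def, abs_div, abs_of_pos (hsqrtpos r), div_lt_one (hsqrtpos r),
        Real.lt_sqrt (abs_nonneg c), sq_abs]
      have : 0 < r ^ (2 * (N - 1)) := by positivity
      linarith
  · -- tendsto
    have hI := hint 1 one_pos
    have ht := intervalIntegral_tendsto_integral_Ioi 1 hI tendsto_id
    have h0 : Tendsto (fun r => (∫ s in Set.Ioi 1, f s) - ∫ s in (1:ℝ)..r, f s)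
        atTop (nhds 0) := by
      simpa using Tendsto.const_sub (∫ s in Set.Ioi 1, f s) ht
    refine h0.congr' ?_
    filter_upwards [eventually_ge_atTop (1:ℝ)] with r hr
    rw [hu r, hsplit 1 r one_pos hr]
    ring
end
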